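/- Let n be a positive integer and let Λ, B ⊆ ℝⁿ be such that the family of half-planes {π_(λ,β)}_{(λ,β) ∈ Λ×B} foliates Δ⁺, i.e.: (existence) for every (u,v) ∈ Δ⁺ there exist λ ∈ Λ, β ∈ B, and real numbers s < t with u = s·λ + β and v = t·λ + β; (uniqueness) this pair (λ,β) is unique for each (u,v) ∈ Δ⁺; and (containment) for every (λ,β) ∈ Λ×B, π_(λ,β) ⊆ Δ⁺. Then for every w = (w_1,…,w_n) ∈ ℝⁿ with w_i > 0 for every i, there exists one and only one λ ∈ Λ such that w = a·λ for a suitable real value a > 0. -/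

import Mathlib

/-- If the family of half-planes `{π_(λ,β)}_{(λ,β) ∈ Λ×B}` foliates `Δ⁺`
(existence, uniqueness, and containment), then for every `w ∈ ℝⁿ` with all
components strictly positive there exists one and only one `λ ∈ Λ` such that
`w = a·λ` for a suitable real value `a > 0`. -/
theorem unique_direction_through_positive_vector (n : ℕ) (hn : 0 < n)
    (Lam B : Set (Fin n → ℝ))
    (hex : ∀ u v : Fin n → ℝ, (∀ i, u i < v i) →
      ∃ lam ∈ Lam, ∃ beta ∈ B, ∃ s t : ℝ, s < t ∧
        u = (fun i => s * lam i + beta i) ∧ v = (fun i => t * lam i + beta i))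
    (huniq : ∀ u v : Fin n → ℝ, (∀ i, u i < v i) →
      ∀ lam ∈ Lam, ∀ beta ∈ B, ∀ lam' ∈ Lam, ∀ beta' ∈ B,
      ∀ s t s' t' : ℝ, s < t → s' < t' →
        u = (fun i => s * lam i + beta i) → v = (fun i => t * lam i + beta i) →
        u = (fun i => s' * lam' i + beta' i) → v = (fun i => t' * lam' i + beta' i) →
        lam = lam' ∧ beta = beta')
    (hcontain : ∀ lam ∈ Lam, ∀ beta ∈ B, ∀ s t : ℝ, s < t →
      ∀ i, s * lam i + beta i < t * lam i + beta i) :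
    ∀ w : Fin n → ℝ, (∀ i, 0 < w i) →
      ∃! lam, lam ∈ Lam ∧ ∃ a : ℝ, 0 < a ∧ ∀ i, w i = a * lam i := by
  intro w hw
  obtain ⟨lam, hlam, beta, hbeta, s, t, hst, hu, hv⟩ :=
    hex (fun _ => 0) w (fun i => hw i)
  have ha : (0:ℝ) < t - s := by linarith
  have hbe : ∀ i, beta i = -(s * lam i) := by
    intro i
    have := congrFun hu i
    linarith
  have hwi : ∀ i, w i = (t - s) * lam i := by
    intro i
    have := congrFun hv i
    rw [this, hbe i]; ring
  refine ⟨lam, ⟨hlam, t - s, ha, hwi⟩, ?_⟩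
  rintro lam' ⟨hlam', a', ha', hw'⟩
  have hane : (t - s) ≠ 0 := ne_of_gt ha
  have hane' : a' ≠ 0 := ne_of_gt ha'
  have hlam'i : ∀ i, lam' i = (t - s) * lam i / a' := by
    intro i
    have h1 := hw' i
    have h2 := hwi i
    field_simp
    linarith
  have hs't' : s * a' / (t - s) < t * a' / (t - s) := by
    apply div_lt_div_of_pos_right (by nlinarith) ha
  have key := huniq (fun _ => 0) w (fun i => hw i) lam hlam beta hbeta lam' hlam' beta hbeta
    s t (s * a' / (t - s)) (t * a' / (t - s)) hst hs't' hu hv ?_ ?_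
  · exact key.1.symm
  · funext i
    rw [hlam'i i, hbe i]
    field_simp
    ring
  · funext i
    rw [hlam'i i, hbe i, hwi i]
    field_simp
    ring
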